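/- Let ρ be a density operator on ℂ^{d_O} ⊗ ℂ^{d_R} with simple spectrum p_1↓ > ... > p_{d_O d_R}↓ and eigenvectors |ψ_n⟩, and H_R Hermitian with non-decreasing eigenvalues λ_m↑ and eigenbasis |ξ_m⟩. Among all unitaries U, the heat ΔQ = Tr[H_R(Tr_O[UρU†] − ρ_R)] is minimised by any U satisfying U|ψ_n⟩ = |φ_l^m⟩ ⊗ |ξ_m⟩ for n ∈ {(m−1)d_O+1, ..., m d_O} (where for each m, {|φ_l^m⟩}_l is an orthonormal basis of ℂ^{d_O}); i.e. the d_O largest eigenvalue-eigenvectors are sent to the lowest reservoir level, the next d_O to the second-lowest, and so on. -/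

import Mathlib

open Finset Matrix

/-- The rank-one projector `|x⟩⟨x|`. -/
noncomputable def outer {n : Type*} (x : n → ℂ) : Matrix n n ℂ :=
  Matrix.of fun a b => x a * star (x b)

/-- Partial trace over the first (object) factor. -/
noncomputable def ptraceO {dO dR : ℕ}
    (M : Matrix (Fin dO × Fin dR) (Fin dO × Fin dR) ℂ) :
    Matrix (Fin dR) (Fin dR) ℂ :=
  Matrix.of fun k l => ∑ i : Fin dO, M (i, k) (i, l)

lemma outer_conj {n : Type*} [Fintype n] (U : Matrix n n ℂ) (v : n → ℂ) :
    U * outer v * Uᴴ = outer (U.mulVec v) := by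
  ext a b
  simp only [outer, Matrix.mul_apply, Matrix.of_apply, conjTranspose_apply, mulVec, dotProduct,
    Finset.sum_mul, Finset.mul_sum, star_sum, star_mul']
  rw [Finset.sum_comm]
  conv_rhs => rw [Finset.sum_comm]
  exact Finset.sum_congr rfl fun j _ => Finset.sum_congr rfl fun i _ => by ring

/-- Parseval for an orthonormal family indexed by a type equivalent to the space index. -/
lemma parseval' {ι n : Type*} [Fintype ι] [Fintype n] [DecidableEq ι] [DecidableEq n]
    (σ : ι ≃ n) (e : ι → n → ℂ)
    (he : ∀ i j, star (e i) ⬝ᵥ e j = if i = j then 1 else 0) (w : n → ℂ) :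
    ∑ m, star (star (e m) ⬝ᵥ w) * (star (e m) ⬝ᵥ w) = star w ⬝ᵥ w := by
  classical
  set E : Matrix ι ι ℂ := Matrix.of fun m k => star (e m (σ k)) with hE
  have h1 : E * Eᴴ = 1 := by
    ext i j
    have := he i j
    simp only [dotProduct, Pi.star_apply] at this
    rw [← Equiv.sum_comp σ (fun k => star (e i k) * e j k)] at this
    simpa [E, Matrix.mul_apply, conjTranspose_apply, Matrix.one_apply, dotProduct] using this
  have h2 : Eᴴ * E = 1 := mul_eq_one_comm.mp h1
  have hcol : ∀ k l : n, (∑ m, e m k * star (e m l)) = if k = l then 1 else 0 := by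
    intro k l
    have := congrArg (fun M => M (σ.symm k) (σ.symm l)) h2
    simpa [Matrix.mul_apply, conjTranspose_apply, Matrix.one_apply, E,
      Equiv.apply_symm_apply, σ.symm.injective.eq_iff] using this
  calc ∑ m, star (star (e m) ⬝ᵥ w) * (star (e m) ⬝ᵥ w)
      = ∑ m, (∑ k, e m k * star (w k)) * (∑ l, star (e m l) * w l) := by
        simp [dotProduct, star_sum, star_mul', Pi.star_apply]
    _ = ∑ k, ∑ l, (w k * star (w l)) * (∑ m, e m l * star (e m k)) := by
        simp only [Finset.sum_mul, Finset.mul_sum]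
        rw [Finset.sum_comm]
        refine Finset.sum_congr rfl fun k _ => ?_
        rw [Finset.sum_comm]
        refine Finset.sum_congr rfl fun l _ => ?_
        exact Finset.sum_congr rfl fun m _ => by ring
    _ = star w ⬝ᵥ w := by
        have : ∀ k : n, (∑ l, (w k * star (w l)) * (∑ m, e m l * star (e m k)))
            = star (w k) * w k := by
          intro k
          rw [Finset.sum_congr rfl fun l _ => by rw [hcol l k]]
          simp [mul_ite, mul_comm]
        rw [Finset.sum_congr rfl fun k _ => this k]
        simp [dotProduct]

/-- unitaries preserve the dot product -/
lemma unit_dot {n : Type*} [Fintype n] [DecidableEq n] {U : Matrix n n ℂ}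
    (hU : U ∈ Matrix.unitaryGroup n ℂ) (v w : n → ℂ) :
    star (U.mulVec v) ⬝ᵥ (U.mulVec w) = star v ⬝ᵥ w := by
  rw [Matrix.star_mulVec, Matrix.dotProduct_mulVec, Matrix.vecMul_vecMul,
    ← Matrix.star_eq_conjTranspose, Unitary.star_mul_self_of_mem hU, Matrix.vecMul_one]


lemma trace_outer_pt {dO dR : ℕ} (u : Fin dR → ℂ) (w : Fin dO × Fin dR → ℂ) :
    (outer u * ptraceO (outer w)).trace
      = ∑ i : Fin dO, star (star u ⬝ᵥ fun k => w (i, k)) * (star u ⬝ᵥ fun k => w (i, k)) := by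
  simp only [Matrix.trace, Matrix.diag, Matrix.mul_apply, outer, ptraceO, Matrix.of_apply,
    dotProduct, star_sum, star_mul', star_star, Pi.star_apply, Finset.mul_sum, Finset.sum_mul]
  rw [Finset.sum_comm]
  rw [Finset.sum_congr rfl fun l _ => Finset.sum_comm]
  rw [Finset.sum_comm]
  exact Finset.sum_congr rfl fun i _ => Finset.sum_congr rfl fun l _ =>
    Finset.sum_congr rfl fun k _ => by ring

lemma traceHR {dO dR : ℕ} (lam : Fin dR → ℝ) (ξ : Fin dR → Fin dR → ℂ)
    (HR : Matrix (Fin dR) (Fin dR) ℂ) (hHR : HR = ∑ m, (lam m : ℂ) • outer (ξ m))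
    (w : Fin dO × Fin dR → ℂ) :
    (HR * ptraceO (outer w)).trace
      = ∑ m, (lam m : ℂ) * ∑ i : Fin dO,
          (Complex.normSq (star (ξ m) ⬝ᵥ fun k => w (i, k)) : ℂ) := by
  rw [hHR, Finset.sum_mul, Matrix.trace_sum]
  refine Finset.sum_congr rfl fun m _ => ?_
  rw [Matrix.smul_mul, Matrix.trace_smul, smul_eq_mul, trace_outer_pt]
  congr 1
  refine Finset.sum_congr rfl fun i _ => ?_
  rw [mul_comm, Complex.star_def, Complex.mul_conj]


lemma threshold {ι : Type*} [Fintype ι] (p s T : ι → ℝ) (c : ℝ)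
    (hT0 : ∀ x, 0 ≤ T x) (hT1 : ∀ x, T x ≤ 1)
    (hs : ∀ x, s x = 0 ∨ s x = 1)
    (hsum : ∑ x, s x = ∑ x, T x)
    (h1 : ∀ x, s x = 1 → p x ≤ c) (h0 : ∀ x, s x = 0 → c ≤ p x) :
    ∑ x, p x * s x ≤ ∑ x, p x * T x := by
  have key : ∀ x ∈ Finset.univ, 0 ≤ (p x - c) * (T x - s x) := by
    intro x _
    rcases hs x with h | h
    · rw [h]; have := h0 x h; have := hT0 x; nlinarith
    · rw [h]; have := h1 x h; have := hT1 x; nlinarith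
  have hnn := Finset.sum_nonneg key
  have expand : ∑ x, (p x - c) * (T x - s x)
      = ((∑ x, p x * T x) - (∑ x, p x * s x)) - (c * (∑ x, T x) - c * (∑ x, s x)) := by
    rw [Finset.mul_sum, Finset.mul_sum, ← Finset.sum_sub_distrib, ← Finset.sum_sub_distrib,
      ← Finset.sum_sub_distrib]
    exact Finset.sum_congr rfl fun x _ => by ring
  rw [expand, hsum] at hnn
  linarith

lemma rearr {dO dR : ℕ} (hdO : 0 < dO) (hdR : 0 < dR)
    (p : Fin dR × Fin dO → ℝ) (hp_nonneg : ∀ x, 0 ≤ p x)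
    (hp_lex : ∀ m m' : Fin dR, ∀ l l' : Fin dO,
      (m < m' ∨ (m = m' ∧ l < l')) → p (m', l') < p (m, l))
    (lam : Fin dR → ℝ) (hlam : Monotone lam)
    (Q : Fin dR × Fin dO → Fin dR → ℝ)
    (hQ0 : ∀ x m, 0 ≤ Q x m)
    (hrow : ∀ x, ∑ m, Q x m = 1)
    (hcol : ∀ m, ∑ x, Q x m = dO) :
    ∑ x, p x * lam x.1 ≤ ∑ x, p x * ∑ m, lam m * Q x m := by
  classical
  set lam' : ℕ → ℝ := fun j => lam ⟨min j (dR-1), by omega⟩ with hlam'def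
  have hlam'mono : Monotone lam' := by
    intro a b hab
    exact hlam (by simp [Fin.le_def]; omega)
  have hlam'eq : ∀ m : Fin dR, lam' m.1 = lam m := by
    intro m
    have : (⟨min m.1 (dR-1), by omega⟩ : Fin dR) = m := by
      ext; simp; omega
    simp only [hlam'def, this]
  set e : ℕ → ℝ := fun j => lam' (j+1) - lam' j with hedef
  have he : ∀ j, 0 ≤ e j := fun j => sub_nonneg.mpr (hlam'mono (Nat.le_succ j))
  have htel : ∀ m : Fin dR, lam m = lam' 0 + ∑ j ∈ Finset.range dR, (if j < m.1 then e j else 0) := by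
    intro m
    have h1 : ∑ j ∈ Finset.range m.1, e j = lam' m.1 - lam' 0 := Finset.sum_range_sub lam' m.1
    have h2 : ∑ j ∈ Finset.range dR, (if j < m.1 then e j else 0) = ∑ j ∈ Finset.range m.1, e j := by
      rw [← Finset.sum_subset (Finset.range_subset_range.mpr m.isLt.le)
        (fun j _ hj => if_neg (fun hlt => hj (Finset.mem_range.mpr hlt)))]
      exact Finset.sum_congr rfl fun j hj => if_pos (Finset.mem_range.mp hj)
    rw [h2, h1, ← hlam'eq m]; ring
  -- rewrite RHS
  have hRHS : ∑ x, p x * ∑ m, lam m * Q x m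
      = lam' 0 * (∑ x, p x)
        + ∑ j ∈ Finset.range dR, e j * ∑ x, p x * (∑ m, if j < m.1 then Q x m else 0) := by
    have hx : ∀ x, p x * ∑ m, lam m * Q x m
        = lam' 0 * p x + ∑ j ∈ Finset.range dR, e j * (p x * (∑ m, if j < m.1 then Q x m else 0)) := by
      intro x
      have : ∑ m, lam m * Q x m
          = lam' 0 + ∑ j ∈ Finset.range dR, e j * (∑ m, if j < m.1 then Q x m else 0) := by
        calc ∑ m, lam m * Q x m
            = ∑ m, (lam' 0 * Q x m + ∑ j ∈ Finset.range dR, (if j < m.1 then e j * Q x m else 0)) := by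
              refine Finset.sum_congr rfl fun m _ => ?_
              rw [htel m, add_mul, Finset.sum_mul]
              congr 1
              exact Finset.sum_congr rfl fun j _ => by split <;> simp
          _ = lam' 0 * (∑ m, Q x m) + ∑ j ∈ Finset.range dR, e j * (∑ m, if j < m.1 then Q x m else 0) := by
              rw [Finset.sum_add_distrib, ← Finset.mul_sum, Finset.sum_comm]
              congr 1
              refine Finset.sum_congr rfl fun j _ => ?_
              rw [Finset.mul_sum]
              exact Finset.sum_congr rfl fun m _ => by split <;> simp
          _ = _ := by rw [hrow x, mul_one]
      rw [this, mul_add, Finset.mul_sum]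
      congr 1
      · ring
      · exact Finset.sum_congr rfl fun j _ => by ring
    rw [Finset.sum_congr rfl fun x _ => hx x, Finset.sum_add_distrib, ← Finset.mul_sum,
      Finset.sum_comm]
    congr 1
    exact Finset.sum_congr rfl fun j _ => by rw [Finset.mul_sum]
  have hLHS : ∑ x, p x * lam x.1
      = lam' 0 * (∑ x, p x)
        + ∑ j ∈ Finset.range dR, e j * ∑ x, (if j < x.1.1 then p x else 0) := by
    have hx : ∀ x : Fin dR × Fin dO, p x * lam x.1
        = lam' 0 * p x + ∑ j ∈ Finset.range dR, e j * (if j < x.1.1 then p x else 0) := by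
      intro x
      rw [htel x.1, mul_add, Finset.mul_sum]
      congr 1
      · ring
      · exact Finset.sum_congr rfl fun j _ => by split <;> ring
    rw [Finset.sum_congr rfl fun x _ => hx x, Finset.sum_add_distrib, ← Finset.mul_sum,
      Finset.sum_comm]
    congr 1
    exact Finset.sum_congr rfl fun j _ => by rw [Finset.mul_sum]
  rw [hLHS, hRHS]
  refine add_le_add_right (Finset.sum_le_sum fun j _ => mul_le_mul_of_nonneg_left ?_ (he j)) _
  -- per-j inequality via threshold
  set s : Fin dR × Fin dO → ℝ := fun x => if j < x.1.1 then 1 else 0 with hsdef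
  set T : Fin dR × Fin dO → ℝ := fun x => ∑ m, if j < m.1 then Q x m else 0 with hTdef
  have hgoal1 : ∑ x, (if j < x.1.1 then p x else 0) = ∑ x, p x * s x := by
    refine Finset.sum_congr rfl fun x _ => ?_
    simp only [hsdef]; split <;> simp
  rw [hgoal1]
  have hT0 : ∀ x, 0 ≤ T x :=
    fun x => Finset.sum_nonneg fun m _ => by split <;> [exact hQ0 x m; exact le_refl 0]
  have hT1 : ∀ x, T x ≤ 1 := by
    intro x
    rw [← hrow x]
    exact Finset.sum_le_sum fun m _ => by split <;> [exact le_refl _; exact hQ0 x m]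
  have hs : ∀ x, s x = 0 ∨ s x = 1 := by
    intro x; simp only [hsdef]; split <;> simp
  have hsum : ∑ x, s x = ∑ x, T x := by
    have h1 : ∑ x, s x = ∑ m : Fin dR, (if j < m.1 then (dO:ℝ) else 0) := by
      rw [Fintype.sum_prod_type]
      refine Finset.sum_congr rfl fun m _ => ?_
      simp only [hsdef]
      by_cases hc : j < m.1 <;> simp [hc, Finset.card_univ]
    have h2 : ∑ x, T x = ∑ m : Fin dR, (if j < m.1 then (dO:ℝ) else 0) := by
      simp only [hTdef]
      rw [Finset.sum_comm]
      refine Finset.sum_congr rfl fun m _ => ?_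
      by_cases hc : j < m.1
      · simp only [if_pos hc]; exact hcol m
      · simp [hc]
    rw [h1, h2]
  by_cases hj : j + 1 < dR
  · refine threshold p s T (p (⟨j+1, hj⟩, ⟨0, hdO⟩)) hT0 hT1 hs hsum ?_ ?_
    · intro x hx
      have hjx : j < x.1.1 := by
        by_contra hc
        simp only [hsdef, if_neg hc] at hx
        norm_num at hx
      rcases Nat.lt_or_ge (j+1) x.1.1 with h | h
      · exact le_of_lt (hp_lex ⟨j+1, hj⟩ x.1 ⟨0, hdO⟩ x.2 (Or.inl (by simpa [Fin.lt_def] using h)))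
      · have hx1 : x.1 = ⟨j+1, hj⟩ := by ext; simp; omega
        rcases Nat.eq_zero_or_pos x.2.1 with h0 | h0
        · have hx2 : x.2 = ⟨0, hdO⟩ := by ext; simp; omega
          rw [← hx1, ← hx2]
        · exact le_of_lt (hp_lex ⟨j+1, hj⟩ x.1 ⟨0, hdO⟩ x.2
            (Or.inr ⟨hx1.symm, by simpa [Fin.lt_def] using h0⟩))
    · intro x hx
      have hjx : ¬ j < x.1.1 := by
        by_contra hc
        simp only [hsdef, if_pos hc] at hx
        norm_num at hx
      exact le_of_lt (hp_lex x.1 ⟨j+1, hj⟩ x.2 ⟨0, hdO⟩ (Or.inl (by simp [Fin.lt_def]; omega)))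
  · refine threshold p s T 0 hT0 hT1 hs hsum ?_ ?_
    · intro x hx
      exfalso
      have : ¬ j < x.1.1 := by have := x.1.isLt; omega
      simp only [hsdef, if_neg this] at hx
      norm_num at hx
    · intro x _
      exact hp_nonneg x

lemma normSq_cast (c : ℂ) : (Complex.normSq c : ℂ) = star c * c := by
  rw [Complex.star_def, mul_comm, Complex.mul_conj]

/-- **Minimising the heat dissipation**: for a density operator with simple,
strictly decreasing spectrum `p` (indexed by `(m, l)` in lexicographic order)
on `ℂ^{d_O} ⊗ ℂ^{d_R}` and reservoir Hamiltonian `H_R` with non-decreasing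
eigenvalues `λ_m` and eigenbasis `|ξ_m⟩`, any unitary `U₀` sending the `m`-th
block of `d_O` eigenvectors (in decreasing order of eigenvalue) to
`|φ_l^m⟩ ⊗ |ξ_m⟩` minimises the heat
`ΔQ(U) = Tr[H_R(Tr_O[UρU†] − ρ_R)]` over all unitaries `U`. -/
theorem min_heat_dissipation {dO dR : ℕ}
    (p : Fin dR × Fin dO → ℝ) (hp_nonneg : ∀ x, 0 ≤ p x)
    (hp_sum : ∑ x, p x = 1)
    (hp_lex : ∀ m m' : Fin dR, ∀ l l' : Fin dO,
      (m < m' ∨ (m = m' ∧ l < l')) → p (m', l') < p (m, l))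
    (ψ : Fin dR × Fin dO → (Fin dO × Fin dR → ℂ))
    (hψ : ∀ x y, star (ψ x) ⬝ᵥ ψ y = if x = y then 1 else 0)
    (lam : Fin dR → ℝ) (hlam : Monotone lam)
    (ξ : Fin dR → (Fin dR → ℂ))
    (hξ : ∀ i j, star (ξ i) ⬝ᵥ ξ j = if i = j then 1 else 0)
    (HR : Matrix (Fin dR) (Fin dR) ℂ)
    (hHR : HR = ∑ m, (lam m : ℂ) • outer (ξ m))
    (ρ : Matrix (Fin dO × Fin dR) (Fin dO × Fin dR) ℂ)
    (hρ : ρ = ∑ x, (p x : ℂ) • outer (ψ x))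
    (U₀ : Matrix (Fin dO × Fin dR) (Fin dO × Fin dR) ℂ)
    (hU₀ : U₀ ∈ Matrix.unitaryGroup (Fin dO × Fin dR) ℂ)
    (φ : Fin dR → Fin dO → (Fin dO → ℂ))
    (hφ : ∀ m, ∀ l l', star (φ m l) ⬝ᵥ φ m l' = if l = l' then 1 else 0)
    (hU₀map : ∀ m l, U₀.mulVec (ψ (m, l)) = fun a => φ m l a.1 * ξ m a.2) :
    ∀ U ∈ Matrix.unitaryGroup (Fin dO × Fin dR) ℂ,
      ((HR * (ptraceO (U₀ * ρ * U₀ᴴ) - ptraceO ρ)).trace).re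
        ≤ ((HR * (ptraceO (U * ρ * Uᴴ) - ptraceO ρ)).trace).re := by
  classical
  intro U hU
  have hdO : 0 < dO := by
    rcases Nat.eq_zero_or_pos dO with h | h
    · exfalso; subst h; simp at hp_sum
    · exact h
  have hdR : 0 < dR := by
    rcases Nat.eq_zero_or_pos dR with h | h
    · exfalso; subst h; simp at hp_sum
    · exact h
  set Qf : Matrix (Fin dO × Fin dR) (Fin dO × Fin dR) ℂ → (Fin dR × Fin dO) → Fin dR → ℝ :=
    fun V x m => ∑ i : Fin dO,
      Complex.normSq (star (ξ m) ⬝ᵥ fun k => V.mulVec (ψ x) (i, k)) with hQf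
  -- trace formula
  have htr : ∀ V : Matrix (Fin dO × Fin dR) (Fin dO × Fin dR) ℂ,
      (HR * ptraceO (V * ρ * Vᴴ)).trace
        = ((∑ x, p x * ∑ m, lam m * Qf V x m : ℝ) : ℂ) := by
    intro V
    have h1 : V * ρ * Vᴴ = ∑ x, (p x : ℂ) • outer (V.mulVec (ψ x)) := by
      rw [hρ, Finset.mul_sum, Finset.sum_mul]
      exact Finset.sum_congr rfl fun x _ => by rw [Matrix.mul_smul, Matrix.smul_mul, outer_conj]
    have h2 : ptraceO (∑ x, (p x : ℂ) • outer (V.mulVec (ψ x)))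
        = ∑ x, (p x : ℂ) • ptraceO (outer (V.mulVec (ψ x))) := by
      ext k l
      simp only [ptraceO, Matrix.of_apply, Matrix.sum_apply, Matrix.smul_apply, smul_eq_mul,
        Finset.mul_sum]
      rw [Finset.sum_comm]
    rw [h1, h2, Finset.mul_sum, Matrix.trace_sum]
    push_cast
    refine Finset.sum_congr rfl fun x _ => ?_
    rw [Matrix.mul_smul, Matrix.trace_smul, smul_eq_mul,
      traceHR lam ξ HR hHR (V.mulVec (ψ x))]
    congr 1
    refine Finset.sum_congr rfl fun m _ => ?_
    rw [hQf]
    push_cast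
    ring
  -- reduce the goal
  have hsub : ∀ V : Matrix (Fin dO × Fin dR) (Fin dO × Fin dR) ℂ,
      (HR * (ptraceO (V * ρ * Vᴴ) - ptraceO ρ)).trace
        = (HR * ptraceO (V * ρ * Vᴴ)).trace - (HR * ptraceO ρ).trace := by
    intro V; rw [mul_sub, Matrix.trace_sub]
  rw [hsub, hsub, Complex.sub_re, Complex.sub_re]
  apply sub_le_sub_right
  rw [htr U₀, htr U, Complex.ofReal_re, Complex.ofReal_re]
  -- value at U₀
  have hQ0val : ∑ x, p x * ∑ m, lam m * Qf U₀ x m = ∑ x, p x * lam x.1 := by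
    refine Finset.sum_congr rfl fun x _ => ?_
    congr 1
    obtain ⟨m', l⟩ := x
    have hQ : ∀ m, Qf U₀ (m', l) m = if m = m' then 1 else 0 := by
      intro m
      have hval : ∀ i : Fin dO, (star (ξ m) ⬝ᵥ fun k => U₀.mulVec (ψ (m', l)) (i, k))
          = φ m' l i * (if m = m' then 1 else 0) := by
        intro i
        rw [hU₀map m' l]
        have : (star (ξ m) ⬝ᵥ fun k => φ m' l i * ξ m' k)
            = φ m' l i * (star (ξ m) ⬝ᵥ ξ m') := by
          simp only [dotProduct, Finset.mul_sum, Pi.star_apply]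
          exact Finset.sum_congr rfl fun k _ => by ring
        rw [this, hξ m m']
      simp only [hQf]
      rw [Finset.sum_congr rfl fun i _ => by rw [hval i]]
      rcases eq_or_ne m m' with hm | hm
      · subst hm
        have h2 : ∑ i, Complex.normSq (φ m l i) = 1 := by
          have : ((∑ i, Complex.normSq (φ m l i) : ℝ) : ℂ) = 1 := by
            push_cast
            rw [Finset.sum_congr rfl fun i _ => normSq_cast (φ m l i)]
            simpa [dotProduct] using hφ m l l
          exact_mod_cast this
        simpa using h2
      · simp [hm]
    rw [Finset.sum_congr rfl fun m _ => by rw [hQ m]]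
    simp [mul_ite]
  rw [hQ0val]
  -- properties of Qf U
  have hQ0 : ∀ x m, 0 ≤ Qf U x m :=
    fun x m => Finset.sum_nonneg fun i _ => Complex.normSq_nonneg _
  have hrowQ : ∀ x, ∑ m, Qf U x m = 1 := by
    intro x
    have key : ((∑ m, Qf U x m : ℝ) : ℂ) = 1 := by
      push_cast [hQf]
      rw [Finset.sum_congr rfl fun m _ => Finset.sum_congr rfl fun i _ => normSq_cast _]
      rw [Finset.sum_comm]
      rw [Finset.sum_congr rfl fun i _ =>
        parseval' (Equiv.refl (Fin dR)) ξ hξ (fun k => U.mulVec (ψ x) (i, k))]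
      have : ∑ i : Fin dO, (star (fun k => U.mulVec (ψ x) (i, k)) ⬝ᵥ fun k => U.mulVec (ψ x) (i, k))
          = star (U.mulVec (ψ x)) ⬝ᵥ U.mulVec (ψ x) := by
        simp [dotProduct, Fintype.sum_prod_type, Pi.star_apply]
      rw [this, unit_dot hU, hψ x x, if_pos rfl]
    exact_mod_cast key
  have hcolQ : ∀ m, ∑ x, Qf U x m = dO := by
    intro m
    set v : Fin dO → (Fin dO × Fin dR → ℂ) := fun i a => (if a.1 = i then 1 else 0) * ξ m a.2
      with hv
    have hc : ∀ (i : Fin dO) (z : Fin dO × Fin dR → ℂ),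
        (star (ξ m) ⬝ᵥ fun k => z (i, k)) = star (v i) ⬝ᵥ z := by
      intro i z
      simp only [dotProduct, Pi.star_apply, hv, Fintype.sum_prod_type, star_mul', apply_ite,
        star_one, star_zero, ite_mul, mul_ite, one_mul, zero_mul, mul_zero]
      rw [Finset.sum_comm]
      rw [Finset.sum_congr rfl fun k _ =>
        Finset.sum_ite_eq' Finset.univ i (fun j => star (ξ m k) * z (j, k))]
      simp
    have hUH : Uᴴ ∈ Matrix.unitaryGroup (Fin dO × Fin dR) ℂ := by
      rw [← Matrix.star_eq_conjTranspose]; exact Unitary.star_mem hU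
    have hw : ∀ i : Fin dO, ∑ x, (Complex.normSq (star (v i) ⬝ᵥ U.mulVec (ψ x)) : ℂ) = 1 := by
      intro i
      have hshift : ∀ x, star (v i) ⬝ᵥ U.mulVec (ψ x)
          = star (star (ψ x) ⬝ᵥ Uᴴ.mulVec (v i)) := by
        intro x
        rw [Matrix.dotProduct_mulVec]
        have h1 : star (star (ψ x) ⬝ᵥ Uᴴ.mulVec (v i))
            = star (Uᴴ.mulVec (v i)) ⬝ᵥ ψ x := by
          simp only [dotProduct, star_sum, star_mul', star_star, Pi.star_apply]
          exact Finset.sum_congr rfl fun k _ => by ring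
        rw [h1, Matrix.star_mulVec, Matrix.conjTranspose_conjTranspose,
          ← Matrix.dotProduct_mulVec, Matrix.dotProduct_mulVec]
      calc ∑ x, (Complex.normSq (star (v i) ⬝ᵥ U.mulVec (ψ x)) : ℂ)
          = ∑ x, star (star (ψ x) ⬝ᵥ Uᴴ.mulVec (v i)) * (star (ψ x) ⬝ᵥ Uᴴ.mulVec (v i)) := by
            refine Finset.sum_congr rfl fun x _ => ?_
            rw [hshift x, Complex.star_def, Complex.normSq_conj, normSq_cast]; rfl
        _ = star (Uᴴ.mulVec (v i)) ⬝ᵥ Uᴴ.mulVec (v i) :=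
            parseval' (Equiv.prodComm (Fin dR) (Fin dO)) ψ hψ (Uᴴ.mulVec (v i))
        _ = star (v i) ⬝ᵥ v i := unit_dot hUH (v i) (v i)
        _ = 1 := by
            rw [← hc i (v i)]
            have : (fun k => v i (i, k)) = ξ m := by
              funext k; simp [hv]
            rw [this, hξ m m, if_pos rfl]
    have key : ((∑ x, Qf U x m : ℝ) : ℂ) = (dO : ℂ) := by
      push_cast [hQf]
      rw [Finset.sum_comm]
      rw [Finset.sum_congr rfl fun i _ => Finset.sum_congr rfl fun x _ => by rw [hc i]]
      rw [Finset.sum_congr rfl fun i _ => hw i]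
      simp
    exact_mod_cast key
  exact rearr hdO hdR p hp_nonneg hp_lex lam hlam (Qf U) hQ0 hrowQ hcolQ
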